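/- arXiv:2008.09008 — 4 statements merged into one kernel-verified Lean document; each statement's English description precedes it below -/
import Mathlib

section
/- The independence number of the graph X obtained from the icosahedron by deleting one edge {a,b} equals 4, and every maximum independent set of X contains both endpoints a and b of the deleted edge. -/
/-- Edge list of the icosahedron on 12 vertices: apex 0, upper 5-ring 1–5,
lower 5-ring 6–10, bottom apex 11. -/
def icoList : List (Fin 12 × Fin 12) :=
  [(0,1),(0,2),(0,3),(0,4),(0,5),
   (1,2),(2,3),(3,4),(4,5),(5,1),
   (1,6),(1,7),(2,7),(2,8),(3,8),(3,9),(4,9),(4,10),(5,10),(5,6),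
   (6,7),(7,8),(8,9),(9,10),(10,6),
   (11,6),(11,7),(11,8),(11,9),(11,10)]

/-- The icosahedron graph (the 5-regular planar graph on 12 vertices). -/
def Ico : SimpleGraph (Fin 12) where
  Adj x y := (x, y) ∈ icoList ∨ (y, x) ∈ icoList
  symm := ⟨fun _ _ h => h.symm.imp id id⟩
  loopless := ⟨by intro x; revert x; decide⟩

instance : DecidableRel Ico.Adj := fun x y =>
  inferInstanceAs (Decidable (_ ∨ _))

/-- `0` and `1` are the endpoints of the deleted edge `{a,b}`:
the icosahedron minus the edge `{0,1}`. -/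
def X : SimpleGraph (Fin 12) where
  Adj x y := Ico.Adj x y ∧ ¬(x = 0 ∧ y = 1) ∧ ¬(x = 1 ∧ y = 0)
  symm := ⟨fun _ _ h => ⟨h.1.symm, fun c => h.2.2 ⟨c.2, c.1⟩, fun c => h.2.1 ⟨c.2, c.1⟩⟩⟩
  loopless := ⟨fun x h => Ico.loopless.irrefl x h.1⟩

instance : DecidableRel X.Adj := fun _ _ =>
  inferInstanceAs (Decidable (_ ∧ _))

/-- `s` is an independent set of `G`: its vertices are pairwise nonadjacent. -/
def IsIndepF {V : Type*} (G : SimpleGraph V) (s : Finset V) : Prop :=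
  ∀ ⦃a⦄, a ∈ s → ∀ ⦃b⦄, b ∈ s → a ≠ b → ¬ G.Adj a b

/-- The independence number of `G`. -/
noncomputable def alphaN {V : Type*} [Fintype V] (G : SimpleGraph V) : ℕ :=
  sSup {n | ∃ s : Finset V, IsIndepF G s ∧ s.card = n}


def T0 : Finset (Fin 12) := {0,1,2}
def T1 : Finset (Fin 12) := {3,4,9}
def T2 : Finset (Fin 12) := {5,6,10}
def T3 : Finset (Fin 12) := {7,8,11}

instance (G : SimpleGraph (Fin 12)) [DecidableRel G.Adj] (s : Finset (Fin 12)) :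
    Decidable (IsIndepF G s) := by unfold IsIndepF; infer_instance

/-- In an independent set, the intersection with a "clique" has at most one element. -/
lemma cap_le_one {s : Finset (Fin 12)} (hs : IsIndepF X s) (t : Finset (Fin 12))
    (ht : ∀ x ∈ t, ∀ y ∈ t, x ≠ y → X.Adj x y) : (s ∩ t).card ≤ 1 := by
  refine Finset.card_le_one.mpr ?_
  intro x hx y hy
  by_contra hne
  exact hs (Finset.mem_inter.1 hx).1 (Finset.mem_inter.1 hy).1 hne
    (ht _ (Finset.mem_inter.1 hx).2 _ (Finset.mem_inter.1 hy).2 hne)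

/-- Main combinatorial lemma. -/
lemma key : ∀ s : Finset (Fin 12), IsIndepF X s →
    s.card ≤ 4 ∧ (s.card = 4 → (0 : Fin 12) ∈ s ∧ (1 : Fin 12) ∈ s) := by
  intro s hs
  have h1 : (s ∩ T1).card ≤ 1 := cap_le_one hs T1 (by decide)
  have h2 : (s ∩ T2).card ≤ 1 := cap_le_one hs T2 (by decide)
  have h3 : (s ∩ T3).card ≤ 1 := cap_le_one hs T3 (by decide)
  have hcover : s ⊆ (s ∩ T0) ∪ (s ∩ T1) ∪ (s ∩ T2) ∪ (s ∩ T3) := by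
    intro v hv
    have hv4 : ∀ w : Fin 12, w ∈ T0 ∨ w ∈ T1 ∨ w ∈ T2 ∨ w ∈ T3 := by decide
    have hv4 := hv4 v
    simp only [Finset.mem_union, Finset.mem_inter]
    tauto
  have hsum : s.card ≤ (s ∩ T0).card + (s ∩ T1).card + (s ∩ T2).card + (s ∩ T3).card := by
    calc s.card ≤ ((s ∩ T0) ∪ (s ∩ T1) ∪ (s ∩ T2) ∪ (s ∩ T3)).card :=
          Finset.card_le_card hcover
      _ ≤ _ := by
          refine le_trans (Finset.card_union_le _ _) ?_
          have := Finset.card_union_le ((s ∩ T0) ∪ (s ∩ T1)) (s ∩ T2)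
          have := Finset.card_union_le (s ∩ T0) (s ∩ T1)
          omega
  by_cases hA : (0 : Fin 12) ∈ s ∧ (1 : Fin 12) ∈ s
  · -- both endpoints in s : s ⊆ {0,1,8,9,10,11}
    obtain ⟨h0, h1'⟩ := hA
    have hsub : s ⊆ ({0,1,8,9,10,11} : Finset (Fin 12)) := by
      intro v hv
      by_contra hmem
      have hkey : ∀ v : Fin 12, v ∉ ({0,1,8,9,10,11} : Finset (Fin 12)) →
          (X.Adj 0 v ∧ (0 : Fin 12) ≠ v) ∨ (X.Adj 1 v ∧ (1 : Fin 12) ≠ v) := by decide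
      rcases hkey v hmem with ⟨ha, hne⟩ | ⟨ha, hne⟩
      · exact hs h0 hv hne ha
      · exact hs h1' hv hne ha
    have hQ : (s ∩ ({8,9,10,11} : Finset (Fin 12))).card ≤ 2 := by
      by_contra hgt
      push_neg at hgt
      obtain ⟨x, y, z, hx, hy, hz, hxy, hxz, hyz⟩ :=
        Finset.two_lt_card_iff.mp hgt
      have hQ3 : ∀ x ∈ ({8,9,10,11} : Finset (Fin 12)), ∀ y ∈ ({8,9,10,11} : Finset (Fin 12)),
          ∀ z ∈ ({8,9,10,11} : Finset (Fin 12)), x ≠ y → x ≠ z → y ≠ z →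
          X.Adj x y ∨ X.Adj x z ∨ X.Adj y z := by decide
      obtain ⟨hxs, hxQ⟩ := Finset.mem_inter.1 hx
      obtain ⟨hys, hyQ⟩ := Finset.mem_inter.1 hy
      obtain ⟨hzs, hzQ⟩ := Finset.mem_inter.1 hz
      rcases hQ3 x hxQ y hyQ z hzQ hxy hxz hyz with h | h | h
      · exact hs hxs hys hxy h
      · exact hs hxs hzs hxz h
      · exact hs hys hzs hyz h
    have hsplit : s ⊆ (s ∩ ({0,1} : Finset (Fin 12))) ∪ (s ∩ ({8,9,10,11} : Finset (Fin 12))) := by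
      intro v hv
      have := hsub hv
      simp only [Finset.mem_union, Finset.mem_inter]
      simp only [Finset.mem_insert, Finset.mem_singleton] at this ⊢
      tauto
    have hcard : s.card ≤ 4 := by
      have := Finset.card_le_card hsplit
      have hu := Finset.card_union_le (s ∩ ({0,1} : Finset (Fin 12)))
        (s ∩ ({8,9,10,11} : Finset (Fin 12)))
      have h01 : (s ∩ ({0,1} : Finset (Fin 12))).card ≤ 2 := by
        refine le_trans (Finset.card_le_card (Finset.inter_subset_right)) (by decide)
      omega
    exact ⟨hcard, fun _ => ⟨h0, h1'⟩⟩
  · -- not both endpoints : at most one vertex in each triangle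
    have h0c : (s ∩ T0).card ≤ 1 := by
      refine Finset.card_le_one.mpr ?_
      intro x hx y hy
      by_contra hne
      obtain ⟨hxs, hxT⟩ := Finset.mem_inter.1 hx
      obtain ⟨hys, hyT⟩ := Finset.mem_inter.1 hy
      have hT : ∀ x ∈ T0, ∀ y ∈ T0, x ≠ y →
          X.Adj x y ∨ ((x = 0 ∧ y = 1) ∨ (x = 1 ∧ y = 0)) := by decide
      rcases hT x hxT y hyT hne with h | h
      · exact hs hxs hys hne h
      · rcases h with ⟨rfl, rfl⟩ | ⟨rfl, rfl⟩
        · exact hA ⟨hxs, hys⟩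
        · exact hA ⟨hys, hxs⟩
    refine ⟨by omega, fun hc4 => ?_⟩
    -- card = 4 forces one vertex per triangle; no such independent transversal exists
    exfalso
    have e0 : (s ∩ T0).card = 1 := by omega
    have e1 : (s ∩ T1).card = 1 := by omega
    have e2 : (s ∩ T2).card = 1 := by omega
    have e3 : (s ∩ T3).card = 1 := by omega
    obtain ⟨a, ha⟩ := Finset.card_eq_one.mp e0
    obtain ⟨b, hb⟩ := Finset.card_eq_one.mp e1
    obtain ⟨c, hc⟩ := Finset.card_eq_one.mp e2
    obtain ⟨d, hd⟩ := Finset.card_eq_one.mp e3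
    have haM : a ∈ s ∩ T0 := by rw [ha]; exact Finset.mem_singleton_self a
    have hbM : b ∈ s ∩ T1 := by rw [hb]; exact Finset.mem_singleton_self b
    have hcM : c ∈ s ∩ T2 := by rw [hc]; exact Finset.mem_singleton_self c
    have hdM : d ∈ s ∩ T3 := by rw [hd]; exact Finset.mem_singleton_self d
    obtain ⟨has, haT⟩ := Finset.mem_inter.1 haM
    obtain ⟨hbs, hbT⟩ := Finset.mem_inter.1 hbM
    obtain ⟨hcs, hcT⟩ := Finset.mem_inter.1 hcM
    obtain ⟨hds, hdT⟩ := Finset.mem_inter.1 hdM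
    have htrans : ∀ a ∈ T0, ∀ b ∈ T1, ∀ c ∈ T2, ∀ d ∈ T3,
        X.Adj a b ∨ X.Adj a c ∨ X.Adj a d ∨ X.Adj b c ∨ X.Adj b d ∨ X.Adj c d := by decide
    have hne : ∀ x ∈ T0, ∀ y ∈ T1, x ≠ y := by decide
    have hne02 : ∀ x ∈ T0, ∀ y ∈ T2, x ≠ y := by decide
    have hne03 : ∀ x ∈ T0, ∀ y ∈ T3, x ≠ y := by decide
    have hne12 : ∀ x ∈ T1, ∀ y ∈ T2, x ≠ y := by decide
    have hne13 : ∀ x ∈ T1, ∀ y ∈ T3, x ≠ y := by decide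
    have hne23 : ∀ x ∈ T2, ∀ y ∈ T3, x ≠ y := by decide
    rcases htrans a haT b hbT c hcT d hdT with h | h | h | h | h | h
    · exact hs has hbs (hne a haT b hbT) h
    · exact hs has hcs (hne02 a haT c hcT) h
    · exact hs has hds (hne03 a haT d hdT) h
    · exact hs hbs hcs (hne12 b hbT c hcT) h
    · exact hs hbs hds (hne13 b hbT d hdT) h
    · exact hs hcs hds (hne23 c hcT d hdT) h

lemma alphaX : alphaN X = 4 := by
  have hb : 4 ∈ upperBounds {n | ∃ s : Finset (Fin 12), IsIndepF X s ∧ s.card = n} := by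
    rintro n ⟨s, hs, rfl⟩
    exact (key s hs).1
  apply le_antisymm
  · exact csSup_le ⟨0, ∅, by intro a h; simp at h, by simp⟩ hb
  · exact le_csSup ⟨4, hb⟩ ⟨({0,1,8,10} : Finset (Fin 12)), by decide, by decide⟩

/-- the independence number of `X` (icosahedron minus the edge `{0,1}`)
equals 4, and every maximum independent set of `X` contains both `0` and `1`. -/
theorem icosahedron_minus_edge_indepNum_and_max_indep_sets :
    alphaN X = 4 ∧
    ∀ s : Finset (Fin 12), IsIndepF X s → s.card = alphaN X →
      (0 : Fin 12) ∈ s ∧ (1 : Fin 12) ∈ s := by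
  refine ⟨alphaX, fun s hs hc => (key s hs).2 (by rw [hc, alphaX])⟩
end

section
/- In the gadget graph H for odd Δ ≥ 3, every maximum independent set contains, for each index i, one entire part (A_i or B_i) of the i-th complete bipartite subgraph. -/
/-- Vertices of the gadget graph with `k` complete bipartite blocks whose parts
`A i`, `B i` have size `m`, apex vertices `a i`, `b i`, and a hub vertex. -/
inductive GadgetV (k m : ℕ) where
  | A (i : Fin k) (j : Fin m)
  | B (i : Fin k) (j : Fin m)
  | a (i : Fin k)
  | b (i : Fin k)
  | hub
  deriving DecidableEq, Fintype

/-- Base (asymmetric) adjacency: all pairs between `A i` and `B i`, `a i` to all of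
`A i`, `b i` to all of `B i`, and the hub to every `a i` and `b i`. -/
def gRel {k m : ℕ} : GadgetV k m → GadgetV k m → Bool
  | .A i _, .B i' _ => i = i'
  | .a i, .A i' _ => i = i'
  | .b i, .B i' _ => i = i'
  | .hub, .a _ => true
  | .hub, .b _ => true
  | _, _ => false

/-- The gadget graph. -/
def Gadget (k m : ℕ) : SimpleGraph (GadgetV k m) where
  Adj x y := x ≠ y ∧ (gRel x y ∨ gRel y x)
  symm := ⟨fun _ _ h => ⟨h.1.symm, h.2.symm⟩⟩
  loopless := ⟨fun _ h => h.1 rfl⟩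

instance {k m : ℕ} : DecidableRel (Gadget k m).Adj := fun _ _ =>
  inferInstanceAs (Decidable (_ ∧ _))

def touched {k m : ℕ} (i : Fin k) : GadgetV k m → Bool
  | .A i' _ => i' = i
  | .B i' _ => i' = i
  | .a i' => i' = i
  | .b i' => i' = i
  | .hub => true

lemma adj_AB {k m : ℕ} (i : Fin k) (j j' : Fin m) :
    (Gadget k m).Adj (.A i j) (.B i j') := ⟨by simp, Or.inl (by simp [gRel])⟩

lemma adj_aA {k m : ℕ} (i : Fin k) (j : Fin m) :
    (Gadget k m).Adj (.a i) (.A i j) := ⟨by simp, Or.inl (by simp [gRel])⟩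

lemma adj_bB {k m : ℕ} (i : Fin k) (j : Fin m) :
    (Gadget k m).Adj (.b i) (.B i j) := ⟨by simp, Or.inl (by simp [gRel])⟩

lemma adj_hub_a {k m : ℕ} (i : Fin k) :
    (Gadget k m).Adj .hub (.a i) := ⟨by simp, Or.inl (by simp [gRel])⟩

lemma adj_hub_b {k m : ℕ} (i : Fin k) :
    (Gadget k m).Adj .hub (.b i) := ⟨by simp, Or.inl (by simp [gRel])⟩

lemma adj_to_A {k m : ℕ} {i : Fin k} {j : Fin m} {x : GadgetV k m}
    (h : (Gadget k m).Adj x (.A i j)) : touched i x = true := by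
  obtain ⟨-, h | h⟩ := h <;> cases x <;> simp_all [gRel, touched]

lemma adj_to_b {k m : ℕ} {i : Fin k} {x : GadgetV k m}
    (h : (Gadget k m).Adj x (.b i)) : touched i x = true := by
  obtain ⟨-, h | h⟩ := h <;> cases x <;> simp_all [gRel, touched]

lemma not_adj_AA {k m : ℕ} (i i' : Fin k) (j j' : Fin m) :
    ¬ (Gadget k m).Adj (.A i j) (.A i' j') := by
  rintro ⟨-, h | h⟩ <;> simp [gRel] at h

lemma not_adj_Ab {k m : ℕ} (i i' : Fin k) (j : Fin m) :
    ¬ (Gadget k m).Adj (.A i j) (.b i') := by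
  rintro ⟨-, h | h⟩ <;> simp [gRel] at h

lemma Tcard {k m : ℕ} (hm : 2 ≤ m) (s : Finset (GadgetV k m))
    (hind : IsIndepF (Gadget k m) s) (i : Fin k) (j0 j1 : Fin m)
    (h0 : GadgetV.A i j0 ∉ s) (h1 : GadgetV.B i j1 ∉ s) :
    (s.filter (fun v => touched i v = true)).card ≤ m := by
  set T := s.filter (fun v => touched i v = true) with hT
  by_cases hA : ∃ j, GadgetV.A i j ∈ s
  · obtain ⟨j, hj⟩ := hA
    have hB : ∀ j', GadgetV.B i j' ∉ s := fun j' hc =>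
      hind hj hc (by simp) (adj_AB i j j')
    have ha : GadgetV.a i ∉ s := fun hc =>
      hind hc hj (by simp) (adj_aA i j)
    by_cases hh : GadgetV.hub ∈ s
    · have hb : GadgetV.b i ∉ s := fun hc =>
        hind hh hc (by simp) (adj_hub_b i)
      have hsub : T ⊆ ((Finset.univ.erase j0).image (GadgetV.A i)) ∪ {GadgetV.hub} := by
        intro v hv
        rw [hT, Finset.mem_filter] at hv
        obtain ⟨hvs, hvt⟩ := hv
        cases v with
        | A i' j' =>
          simp only [touched, decide_eq_true_eq] at hvt
          subst hvt
          have : j' ≠ j0 := fun h => h0 (h ▸ hvs)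
          exact Finset.mem_union_left _
            (Finset.mem_image.2 ⟨j', Finset.mem_erase.2 ⟨this, Finset.mem_univ _⟩, rfl⟩)
        | B i' j' =>
          simp only [touched, decide_eq_true_eq] at hvt
          subst hvt
          exact absurd hvs (hB j')
        | a i' =>
          simp only [touched, decide_eq_true_eq] at hvt
          subst hvt; exact absurd hvs ha
        | b i' =>
          simp only [touched, decide_eq_true_eq] at hvt
          subst hvt; exact absurd hvs hb
        | hub => simp
      calc T.card ≤ _ := Finset.card_le_card hsub
        _ ≤ ((Finset.univ.erase j0).image (GadgetV.A i)).card + 1 := by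
            apply le_trans (Finset.card_union_le _ _); simp
        _ ≤ (m - 1) + 1 := by
            have := Finset.card_image_le (s := Finset.univ.erase j0) (f := GadgetV.A i)
            simp [Finset.card_erase_of_mem] at this ⊢
            omega
        _ ≤ m := by omega
    · have hsub : T ⊆ ((Finset.univ.erase j0).image (GadgetV.A i)) ∪ {GadgetV.b i} := by
        intro v hv
        rw [hT, Finset.mem_filter] at hv
        obtain ⟨hvs, hvt⟩ := hv
        cases v with
        | A i' j' =>
          simp only [touched, decide_eq_true_eq] at hvt
          subst hvt
          have : j' ≠ j0 := fun h => h0 (h ▸ hvs)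
          exact Finset.mem_union_left _
            (Finset.mem_image.2 ⟨j', Finset.mem_erase.2 ⟨this, Finset.mem_univ _⟩, rfl⟩)
        | B i' j' =>
          simp only [touched, decide_eq_true_eq] at hvt
          subst hvt
          exact absurd hvs (hB j')
        | a i' =>
          simp only [touched, decide_eq_true_eq] at hvt
          subst hvt; exact absurd hvs ha
        | b i' =>
          simp only [touched, decide_eq_true_eq] at hvt
          subst hvt; simp
        | hub => exact absurd hvs hh
      calc T.card ≤ _ := Finset.card_le_card hsub
        _ ≤ ((Finset.univ.erase j0).image (GadgetV.A i)).card + 1 := by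
            apply le_trans (Finset.card_union_le _ _); simp
        _ ≤ (m - 1) + 1 := by
            have := Finset.card_image_le (s := Finset.univ.erase j0) (f := GadgetV.A i)
            simp [Finset.card_erase_of_mem] at this ⊢
            omega
        _ ≤ m := by omega
  · by_cases hBe : ∃ j, GadgetV.B i j ∈ s
    · obtain ⟨j, hj⟩ := hBe
      have hAn : ∀ j', GadgetV.A i j' ∉ s := fun j' hc =>
        hind hc hj (by simp) (adj_AB i j' j)
      have hb : GadgetV.b i ∉ s := fun hc =>
        hind hc hj (by simp) (adj_bB i j)
      by_cases hh : GadgetV.hub ∈ s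
      · have ha : GadgetV.a i ∉ s := fun hc =>
          hind hh hc (by simp) (adj_hub_a i)
        have hsub : T ⊆ ((Finset.univ.erase j1).image (GadgetV.B i)) ∪ {GadgetV.hub} := by
          intro v hv
          rw [hT, Finset.mem_filter] at hv
          obtain ⟨hvs, hvt⟩ := hv
          cases v with
          | A i' j' =>
            simp only [touched, decide_eq_true_eq] at hvt
            subst hvt; exact absurd hvs (hAn j')
          | B i' j' =>
            simp only [touched, decide_eq_true_eq] at hvt
            subst hvt
            have : j' ≠ j1 := fun h => h1 (h ▸ hvs)
            exact Finset.mem_union_left _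
              (Finset.mem_image.2 ⟨j', Finset.mem_erase.2 ⟨this, Finset.mem_univ _⟩, rfl⟩)
          | a i' =>
            simp only [touched, decide_eq_true_eq] at hvt
            subst hvt; exact absurd hvs ha
          | b i' =>
            simp only [touched, decide_eq_true_eq] at hvt
            subst hvt; exact absurd hvs hb
          | hub => simp
        calc T.card ≤ _ := Finset.card_le_card hsub
          _ ≤ ((Finset.univ.erase j1).image (GadgetV.B i)).card + 1 := by
              apply le_trans (Finset.card_union_le _ _); simp
          _ ≤ (m - 1) + 1 := by
              have := Finset.card_image_le (s := Finset.univ.erase j1) (f := GadgetV.B i)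
              simp [Finset.card_erase_of_mem] at this ⊢
              omega
          _ ≤ m := by omega
      · have hsub : T ⊆ ((Finset.univ.erase j1).image (GadgetV.B i)) ∪ {GadgetV.a i} := by
          intro v hv
          rw [hT, Finset.mem_filter] at hv
          obtain ⟨hvs, hvt⟩ := hv
          cases v with
          | A i' j' =>
            simp only [touched, decide_eq_true_eq] at hvt
            subst hvt; exact absurd hvs (hAn j')
          | B i' j' =>
            simp only [touched, decide_eq_true_eq] at hvt
            subst hvt
            have : j' ≠ j1 := fun h => h1 (h ▸ hvs)
            exact Finset.mem_union_left _
              (Finset.mem_image.2 ⟨j', Finset.mem_erase.2 ⟨this, Finset.mem_univ _⟩, rfl⟩)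
          | a i' =>
            simp only [touched, decide_eq_true_eq] at hvt
            subst hvt; simp
          | b i' =>
            simp only [touched, decide_eq_true_eq] at hvt
            subst hvt; exact absurd hvs hb
          | hub => exact absurd hvs hh
        calc T.card ≤ _ := Finset.card_le_card hsub
          _ ≤ ((Finset.univ.erase j1).image (GadgetV.B i)).card + 1 := by
              apply le_trans (Finset.card_union_le _ _); simp
          _ ≤ (m - 1) + 1 := by
              have := Finset.card_image_le (s := Finset.univ.erase j1) (f := GadgetV.B i)
              simp [Finset.card_erase_of_mem] at this ⊢
              omega
          _ ≤ m := by omega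
    · by_cases hh : GadgetV.hub ∈ s
      · have ha : GadgetV.a i ∉ s := fun hc =>
          hind hh hc (by simp) (adj_hub_a i)
        have hb : GadgetV.b i ∉ s := fun hc =>
          hind hh hc (by simp) (adj_hub_b i)
        have hsub : T ⊆ {GadgetV.hub} := by
          intro v hv
          rw [hT, Finset.mem_filter] at hv
          obtain ⟨hvs, hvt⟩ := hv
          cases v with
          | A i' j' => exact absurd hvs (fun h => hA ⟨_, by
              simp only [touched, decide_eq_true_eq] at hvt; exact hvt ▸ h⟩)
          | B i' j' => exact absurd hvs (fun h => hBe ⟨_, by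
              simp only [touched, decide_eq_true_eq] at hvt; exact hvt ▸ h⟩)
          | a i' =>
            simp only [touched, decide_eq_true_eq] at hvt
            subst hvt; exact absurd hvs ha
          | b i' =>
            simp only [touched, decide_eq_true_eq] at hvt
            subst hvt; exact absurd hvs hb
          | hub => simp
        have := Finset.card_le_card hsub
        simp at this; omega
      · have hsub : T ⊆ {GadgetV.a i, GadgetV.b i} := by
          intro v hv
          rw [hT, Finset.mem_filter] at hv
          obtain ⟨hvs, hvt⟩ := hv
          cases v with
          | A i' j' => exact absurd hvs (fun h => hA ⟨_, by
              simp only [touched, decide_eq_true_eq] at hvt; exact hvt ▸ h⟩)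
          | B i' j' => exact absurd hvs (fun h => hBe ⟨_, by
              simp only [touched, decide_eq_true_eq] at hvt; exact hvt ▸ h⟩)
          | a i' =>
            simp only [touched, decide_eq_true_eq] at hvt
            subst hvt; simp
          | b i' =>
            simp only [touched, decide_eq_true_eq] at hvt
            subst hvt; simp
          | hub => exact absurd hvs hh
        have := Finset.card_le_card hsub
        have h2 : ({GadgetV.a i, GadgetV.b i} : Finset (GadgetV k m)).card ≤ 2 :=
          Finset.card_le_two
        omega

lemma key_s8 {k m : ℕ} (hm : 2 ≤ m) (s : Finset (GadgetV k m))
    (hind : IsIndepF (Gadget k m) s)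
    (hmax : ∀ t, IsIndepF (Gadget k m) t → t.card ≤ s.card) (i : Fin k) :
    (∀ j, GadgetV.A i j ∈ s) ∨ (∀ j, GadgetV.B i j ∈ s) := by
  by_contra hc
  push_neg at hc
  obtain ⟨⟨j0, h0⟩, ⟨j1, h1⟩⟩ := hc
  set added : Finset (GadgetV k m) :=
    (Finset.univ.image (GadgetV.A i)) ∪ {GadgetV.b i} with hadded
  set t : Finset (GadgetV k m) :=
    (s.filter (fun v => ¬ touched i v = true)) ∪ added with ht
  have hmemt : ∀ v, v ∈ t ↔
      (v ∈ s ∧ touched i v = false) ∨ (∃ j, v = GadgetV.A i j) ∨ v = GadgetV.b i := by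
    intro v
    simp only [ht, hadded, Finset.mem_union, Finset.mem_filter, Finset.mem_image,
      Finset.mem_singleton, Finset.mem_univ, true_and]
    constructor
    · rintro ((⟨h, h'⟩) | (⟨j, rfl⟩ | rfl))
      · exact Or.inl ⟨h, by simpa using h'⟩
      · exact Or.inr (Or.inl ⟨j, rfl⟩)
      · exact Or.inr (Or.inr rfl)
    · rintro ((⟨h, h'⟩) | (⟨j, rfl⟩ | rfl))
      · exact Or.inl ⟨h, by simp [h']⟩
      · exact Or.inr (Or.inl ⟨j, rfl⟩)
      · exact Or.inr (Or.inr rfl)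
  have htind : IsIndepF (Gadget k m) t := by
    intro x hx y hy hxy hadj
    rw [hmemt] at hx hy
    rcases hx with ⟨hxs, hxf⟩ | ⟨j, rfl⟩ | rfl
    · rcases hy with ⟨hys, hyf⟩ | ⟨j, rfl⟩ | rfl
      · exact hind hxs hys hxy hadj
      · rw [adj_to_A hadj] at hxf; simp at hxf
      · rw [adj_to_b hadj] at hxf; simp at hxf
    · rcases hy with ⟨hys, hyf⟩ | ⟨j', rfl⟩ | rfl
      · rw [adj_to_A hadj.symm] at hyf; simp at hyf
      · exact not_adj_AA i i j j' hadj
      · exact not_adj_Ab i i j hadj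
    · rcases hy with ⟨hys, hyf⟩ | ⟨j', rfl⟩ | rfl
      · rw [adj_to_b hadj.symm] at hyf; simp at hyf
      · exact not_adj_Ab i i j' hadj.symm
      · exact hxy rfl
  have haddcard : added.card = m + 1 := by
    rw [hadded, Finset.card_union_of_disjoint (by simp)]
    rw [Finset.card_image_of_injective _ (fun a b h => by injection h)]
    simp
  have hdisj : Disjoint (s.filter (fun v => ¬ touched i v = true)) added := by
    rw [Finset.disjoint_left]
    intro v hv hv'
    rw [Finset.mem_filter] at hv
    rw [hadded, Finset.mem_union, Finset.mem_image, Finset.mem_singleton] at hv'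
    rcases hv' with ⟨j, -, rfl⟩ | rfl
    · exact hv.2 (by simp [touched])
    · exact hv.2 (by simp [touched])
  have htcard : t.card = (s.filter (fun v => ¬ touched i v = true)).card + (m + 1) := by
    rw [ht, Finset.card_union_of_disjoint hdisj, haddcard]
  have hsplit := Finset.card_filter_add_card_filter_not
    (s := s) (p := fun v => touched i v = true)
  have hTle := Tcard hm s hind i j0 j1 h0 h1
  have := hmax t htind
  omega

/-- for odd `Δ ≥ 3`, every maximum independent set of the gadget graph
contains, for each index `i`, one entire part (`A i` or `B i`) of the `i`-th complete
bipartite subgraph. -/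
theorem gadget_max_indep_set_contains_a_full_part (Δ : ℕ) (hodd : Odd Δ) (h3 : 3 ≤ Δ)
    (s : Finset (GadgetV ((Δ - 1) / 2) (Δ - 1)))
    (hind : IsIndepF (Gadget ((Δ - 1) / 2) (Δ - 1)) s)
    (hmax : ∀ t : Finset (GadgetV ((Δ - 1) / 2) (Δ - 1)),
      IsIndepF (Gadget ((Δ - 1) / 2) (Δ - 1)) t → t.card ≤ s.card) :
    ∀ i : Fin ((Δ - 1) / 2),
      (∀ j : Fin (Δ - 1), GadgetV.A i j ∈ s) ∨ (∀ j : Fin (Δ - 1), GadgetV.B i j ∈ s) := by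
  intro i
  exact key_s8 (by omega) s hind hmax i
end

section
/- In the gadget graph H for odd Δ ≥ 3, every vertex other than the hub vertex h has degree exactly Δ, and h has degree exactly Δ - 1. -/
lemma nbA {k m : ℕ} (i : Fin k) (j : Fin m) :
    (Gadget k m).neighborFinset (.A i j) =
      insert (GadgetV.a i) (Finset.univ.image (GadgetV.B i)) := by
  ext w
  rw [SimpleGraph.mem_neighborFinset]
  cases w <;>
    simp [Gadget, gRel, GadgetV.A.injEq, Fin.ext_iff]

lemma nbB {k m : ℕ} (i : Fin k) (j : Fin m) :
    (Gadget k m).neighborFinset (.B i j) =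
      insert (GadgetV.b i) (Finset.univ.image (GadgetV.A i)) := by
  ext w
  rw [SimpleGraph.mem_neighborFinset]
  cases w <;>
    simp [Gadget, gRel, GadgetV.B.injEq, Fin.ext_iff] <;> omega

lemma nba {k m : ℕ} (i : Fin k) :
    (Gadget k m).neighborFinset (.a i) =
      insert GadgetV.hub (Finset.univ.image (GadgetV.A i)) := by
  ext w
  rw [SimpleGraph.mem_neighborFinset]
  cases w <;> simp [Gadget, gRel]

lemma nbb {k m : ℕ} (i : Fin k) :
    (Gadget k m).neighborFinset (.b i) =
      insert GadgetV.hub (Finset.univ.image (GadgetV.B i)) := by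
  ext w
  rw [SimpleGraph.mem_neighborFinset]
  cases w <;> simp [Gadget, gRel]

lemma nbhub {k m : ℕ} :
    (Gadget k m).neighborFinset .hub =
      (Finset.univ.image GadgetV.a) ∪ (Finset.univ.image GadgetV.b) := by
  ext w
  rw [SimpleGraph.mem_neighborFinset]
  cases w <;> simp [Gadget, gRel]

lemma cardB {k m : ℕ} (i : Fin k) :
    (insert (GadgetV.b i) (Finset.univ.image (GadgetV.A i)) : Finset (GadgetV k m)).card
      = m + 1 := by
  rw [Finset.card_insert_of_notMem (by simp), Finset.card_image_of_injective _
    (fun x y h => by injection h), Finset.card_univ, Fintype.card_fin]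

lemma cardA {k m : ℕ} (i : Fin k) :
    (insert (GadgetV.a i) (Finset.univ.image (GadgetV.B i)) : Finset (GadgetV k m)).card
      = m + 1 := by
  rw [Finset.card_insert_of_notMem (by simp), Finset.card_image_of_injective _
    (fun x y h => by injection h), Finset.card_univ, Fintype.card_fin]

lemma cardhubA {k m : ℕ} (i : Fin k) :
    (insert GadgetV.hub (Finset.univ.image (GadgetV.A i)) : Finset (GadgetV k m)).card
      = m + 1 := by
  rw [Finset.card_insert_of_notMem (by simp), Finset.card_image_of_injective _
    (fun x y h => by injection h), Finset.card_univ, Fintype.card_fin]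

lemma cardhubB {k m : ℕ} (i : Fin k) :
    (insert GadgetV.hub (Finset.univ.image (GadgetV.B i)) : Finset (GadgetV k m)).card
      = m + 1 := by
  rw [Finset.card_insert_of_notMem (by simp), Finset.card_image_of_injective _
    (fun x y h => by injection h), Finset.card_univ, Fintype.card_fin]

lemma cardhub {k m : ℕ} :
    ((Finset.univ.image GadgetV.a) ∪ (Finset.univ.image GadgetV.b)
      : Finset (GadgetV k m)).card = 2 * k := by
  rw [Finset.card_union_of_disjoint (by
    simp [Finset.disjoint_left]), Finset.card_image_of_injective _
    (fun x y h => by injection h), Finset.card_image_of_injective _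
    (fun x y h => by injection h), Finset.card_univ, Fintype.card_fin]
  omega

/-- for odd `Δ ≥ 3`, every vertex of the gadget graph other than the hub
has degree exactly `Δ`, and the hub has degree exactly `Δ - 1`. -/
theorem gadget_degrees (Δ : ℕ) (hodd : Odd Δ) (h3 : 3 ≤ Δ) :
    (∀ v : GadgetV ((Δ - 1) / 2) (Δ - 1), v ≠ GadgetV.hub →
      (Gadget ((Δ - 1) / 2) (Δ - 1)).degree v = Δ) ∧
    (Gadget ((Δ - 1) / 2) (Δ - 1)).degree GadgetV.hub = Δ - 1 := by
  obtain ⟨t, ht⟩ := hodd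
  constructor
  · rintro (⟨i, j⟩ | ⟨i, j⟩ | i | i | _) hv
    · rw [SimpleGraph.degree, nbA, cardA]; omega
    · rw [SimpleGraph.degree, nbB, cardB]; omega
    · rw [SimpleGraph.degree, nba, cardhubA]; omega
    · rw [SimpleGraph.degree, nbb, cardhubB]; omega
    · exact absurd rfl hv
  · rw [SimpleGraph.degree, nbhub, cardhub]; omega
end

section
/- Let G' be obtained from a graph G by attaching, for each vertex v of G, some number of pendant gadget graphs via edges to their hub vertices, where each gadget H satisfies: every maximum independent set of H avoids the hub, and α(H) = s. If m gadgets are attached in total, then α(G') = α(G) + m·s. -/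
/-- `G'`: the graph obtained from `G` by attaching `m` disjoint copies of the gadget
`H`; the `i`-th copy is attached by a single edge joining its hub vertex `hub` to the
vertex `f i` of `G`. -/
def multiAttach {V W : Type*} (G : SimpleGraph V) (H : SimpleGraph W) (hub : W)
    (m : ℕ) (f : Fin m → V) : SimpleGraph (V ⊕ Fin m × W) where
  Adj x y := match x, y with
    | Sum.inl u, Sum.inl v => G.Adj u v
    | Sum.inr (i, u), Sum.inr (j, v) => i = j ∧ H.Adj u v
    | Sum.inl u, Sum.inr (i, v) => u = f i ∧ v = hub
    | Sum.inr (i, v), Sum.inl u => u = f i ∧ v = hub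
  symm := ⟨by
    rintro (u | ⟨i, u⟩) (v | ⟨j, v⟩) h
    · exact h.symm
    · exact h
    · exact h
    · exact ⟨h.1.symm, h.2.symm⟩⟩
  loopless := ⟨by
    rintro (u | ⟨i, u⟩) h
    · exact G.irrefl h
    · exact H.irrefl h.2⟩

open Finset

lemma bddAboveIndep {V : Type*} [Fintype V] (G : SimpleGraph V) :
    BddAbove {n | ∃ s : Finset V, IsIndepF G s ∧ s.card = n} := by
  refine ⟨Fintype.card V, ?_⟩
  rintro n ⟨s, -, rfl⟩
  exact s.card_le_univ

lemma le_alphaN {V : Type*} [Fintype V] {G : SimpleGraph V} {t : Finset V}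
    (ht : IsIndepF G t) : t.card ≤ alphaN G :=
  le_csSup (bddAboveIndep G) ⟨t, ht, rfl⟩

lemma exists_alphaN {V : Type*} [Fintype V] (G : SimpleGraph V) :
    ∃ t : Finset V, IsIndepF G t ∧ t.card = alphaN G := by
  have h0 : (0:ℕ) ∈ {n | ∃ s : Finset V, IsIndepF G s ∧ s.card = n} :=
    ⟨∅, fun a ha => absurd ha (Finset.notMem_empty a), Finset.card_empty⟩
  exact Nat.sSup_mem ⟨0, h0⟩ (bddAboveIndep G)
/-- if every maximum independent set of the gadget `H` avoids its hub
and `α(H) = s`, then attaching `m` copies of `H` to `G` (each via a single edge from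
some vertex of `G` to the hub of that copy) yields `α(G') = α(G) + m * s`. -/
theorem alpha_multiAttach {V W : Type*} [Fintype V] [Fintype W]
    (G : SimpleGraph V) (H : SimpleGraph W) (hub : W) (s : ℕ) (hs : alphaN H = s)
    (hhub : ∀ t : Finset W, IsIndepF H t → hub ∈ t → t.card < s)
    (m : ℕ) (f : Fin m → V) :
    alphaN (multiAttach G H hub m f) = alphaN G + m * s := by
  classical
  apply le_antisymm
  · -- upper bound
    obtain ⟨T, hT, hTc⟩ := exists_alphaN (multiAttach G H hub m f)
    rw [← hTc]
    have hsplit : T.card = T.toLeft.card + T.toRight.card :=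
      (Finset.card_toLeft_add_card_toRight (u := T)).symm
    rw [hsplit]
    have h1 : T.toLeft.card ≤ alphaN G := by
      apply le_alphaN
      intro a ha b hb hab hadj
      exact hT (Finset.mem_toLeft.mp ha) (Finset.mem_toLeft.mp hb)
        (by simpa using hab) hadj
    have h2 : T.toRight.card ≤ m * s := by
      rw [Finset.card_eq_sum_card_fiberwise
        (f := Prod.fst) (t := (Finset.univ : Finset (Fin m))) (fun x _ => Finset.mem_univ _)]
      calc ∑ i : Fin m, (T.toRight.filter (fun p => p.1 = i)).card
          ≤ ∑ _i : Fin m, s := by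
            apply Finset.sum_le_sum
            intro i _
            set C := (T.toRight.filter (fun p => p.1 = i)).image Prod.snd with hC
            have hcard : (T.toRight.filter (fun p => p.1 = i)).card = C.card := by
              rw [hC, Finset.card_image_of_injOn]
              intro p hp q hq hpq
              simp only [Finset.mem_coe, Finset.mem_filter] at hp hq
              exact Prod.ext (hp.2.trans hq.2.symm) hpq
            rw [hcard, ← hs]
            apply le_alphaN
            intro a ha b hb hab hadj
            simp only [hC, Finset.mem_image, Finset.mem_filter] at ha hb
            obtain ⟨p, ⟨hp, hpi⟩, rfl⟩ := ha
            obtain ⟨q, ⟨hq, hqi⟩, rfl⟩ := hb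
            refine hT (Finset.mem_toRight.mp hp) (Finset.mem_toRight.mp hq) ?_ ?_
            · simp only [ne_eq, Sum.inr.injEq]
              intro h
              exact hab (congrArg Prod.snd h)
            · show (multiAttach G H hub m f).Adj (Sum.inr p) (Sum.inr q)
              obtain ⟨p1, p2⟩ := p; obtain ⟨q1, q2⟩ := q
              exact ⟨hpi.trans hqi.symm, hadj⟩
        _ = m * s := by simp [Finset.card_univ, mul_comm]
    omega
  · -- lower bound
    obtain ⟨A, hA, hAc⟩ := exists_alphaN G
    obtain ⟨B, hB, hBc⟩ := exists_alphaN H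
    have hhubB : hub ∉ B := fun h => absurd (hhub B hB h) (by omega)
    set S : Finset (V ⊕ Fin m × W) :=
      A.map ⟨Sum.inl, Sum.inl_injective⟩ ∪
        (Finset.univ ×ˢ B).map ⟨Sum.inr, Sum.inr_injective⟩ with hS
    have hScard : S.card = alphaN G + m * s := by
      rw [hS, Finset.card_union_of_disjoint, Finset.card_map, Finset.card_map,
        Finset.card_product, Finset.card_univ, Fintype.card_fin, hAc, hBc, hs]
      simp only [Finset.disjoint_left, Finset.mem_map]
      rintro x ⟨a, -, rfl⟩ ⟨p, -, h⟩
      exact Sum.inl_ne_inr h.symm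
    rw [← hScard]
    apply le_alphaN
    intro x hx y hy hxy hadj
    simp only [hS, Finset.mem_union, Finset.mem_map, Function.Embedding.coeFn_mk,
      Finset.mem_product, Finset.mem_univ, true_and] at hx hy
    rcases hx with ⟨a, ha, rfl⟩ | ⟨p, hp, rfl⟩ <;>
      rcases hy with ⟨b, hb, rfl⟩ | ⟨q, hq, rfl⟩
    · exact hA ha hb (by simpa using hxy) hadj
    · obtain ⟨q1, q2⟩ := q
      have : q2 = hub := hadj.2
      exact hhubB (this ▸ hq)
    · obtain ⟨p1, p2⟩ := p
      have : p2 = hub := hadj.2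
      exact hhubB (this ▸ hp)
    · obtain ⟨p1, p2⟩ := p; obtain ⟨q1, q2⟩ := q
      obtain ⟨rfl, hadj2⟩ := hadj
      have hne : p2 ≠ q2 := fun h => hxy (by rw [h])
      exact hB hp hq hne hadj2
end
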